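/- Let δ > 0 and let L ≥ 3 be an integer with 64δL² < 1. Then for every z ∈ ℤ₊ and every k ≥ 1, the probability that there exists a cluster C of level at least 1 with α(C) = z and m(C) = k is at most 32(2δL)^k / ((1 − 4δL²)(1 − 64δL²)); in particular this bound has the form c₁ e^{−c₂ k} with c₂ = −log(2δ) − log L > log L. -/

import Mathlib

open scoped Classical

noncomputable section

/-- `α(C)`: the smallest element of a cluster. -/
def clAlpha (c : Finset ℕ) : ℕ := sInf (↑c : Set ℕ)

/-- `ω(C)`: the largest element of a cluster. -/
def clOmega (c : Finset ℕ) : ℕ := sSup (↑c : Set ℕ)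

/-- Euclidean distance between two finite subsets of `ℤ₊`. -/
def clDist (a b : Finset ℕ) : ℕ :=
  sInf {d : ℕ | ∃ x ∈ a, ∃ y ∈ b, d = max x y - min x y}

/-- A maximal `(k+1)`-run among a family `F` of clusters: at least two consecutive members
of `F`, successive ones at Euclidean distance `< L^(k+1)`, maximal in the sense that the
member of `F` immediately preceding (resp. following) the run, if any, is at distance
`≥ L^(k+1)`. -/
structure MaxRun (L k : ℕ) (F : Set (Finset ℕ)) where
  n : ℕ
  c : ℕ → Finset ℕ
  two_le : 2 ≤ n
  mem : ∀ i, i < n → c i ∈ F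
  ordered : ∀ i, i + 1 < n → clOmega (c i) < clAlpha (c (i + 1))
  consecutive : ∀ i, i + 1 < n → ∀ b ∈ F,
    ¬(clOmega (c i) < clAlpha b ∧ clOmega b < clAlpha (c (i + 1)))
  close : ∀ i, i + 1 < n → clDist (c i) (c (i + 1)) < L ^ (k + 1)
  max_below : ∀ b ∈ F, clOmega b < clAlpha (c 0) →
    (∀ b' ∈ F, ¬(clOmega b < clAlpha b' ∧ clOmega b' < clAlpha (c 0))) →
    L ^ (k + 1) ≤ clDist b (c 0)
  max_above : ∀ b ∈ F, clOmega (c (n - 1)) < clAlpha b →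
    (∀ b' ∈ F, ¬(clOmega (c (n - 1)) < clAlpha b' ∧ clOmega b' < clAlpha b)) →
    L ^ (k + 1) ≤ clDist (c (n - 1)) b

/-- The span of a run: the smallest integer interval containing all of its constituents. -/
def MaxRun.spanIcc {L k : ℕ} {F : Set (Finset ℕ)} (R : MaxRun L k F) : Finset ℕ :=
  Finset.Icc (clAlpha (R.c 0)) (clOmega (R.c (R.n - 1)))

/-- The cluster of level `k+1` produced by a maximal `(k+1)`-run: `span(run) ∩ Γ`. -/
def MaxRun.cluster {L k : ℕ} {F : Set (Finset ℕ)} (Γ : Set ℕ) (R : MaxRun L k F) : Finset ℕ :=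
  R.spanIcc.filter (fun x => x ∈ Γ)

/-- The mass of the cluster produced by a run with constituent masses `m₁, …, m_n`:
`m₁ + ∑_{s=2}^n (m_s − k)`. -/
def MaxRun.newMass {L k : ℕ} {F : Set (Finset ℕ)} (mass : Finset ℕ → ℕ) (R : MaxRun L k F) : ℕ :=
  mass (R.c 0) + ∑ i ∈ Finset.Ico 1 R.n, (mass (R.c i) - k)

/-- The recursive cluster hierarchy over the environment `Γ ⊆ ℤ₊` with parameter `L`:
`C 0` is the partition of `Γ` into singletons of mass one; `C (k+1)` consists of the
clusters produced by the maximal `(k+1)`-runs of clusters of `C k` of mass at least `k+1`,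
together with the clusters of `C k` disjoint from the spans of all such runs. -/
structure ClusterHierarchy (L : ℕ) (Γ : Set ℕ) where
  C : ℕ → Set (Finset ℕ)
  mass : Finset ℕ → ℕ
  C_zero : C 0 = {s | ∃ x ∈ Γ, s = {x}}
  mass_zero : ∀ x ∈ Γ, mass ({x} : Finset ℕ) = 1
  mem_succ : ∀ k c, c ∈ C (k + 1) ↔
    ((∃ R : MaxRun L k {b | b ∈ C k ∧ k + 1 ≤ mass b}, c = R.cluster Γ) ∨
     (c ∈ C k ∧ ∀ R : MaxRun L k {b | b ∈ C k ∧ k + 1 ≤ mass b},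
        ∀ x ∈ c, x ∉ R.spanIcc))
  mass_succ : ∀ k (R : MaxRun L k {b | b ∈ C k ∧ k + 1 ≤ mass b}),
    mass (R.cluster Γ) = R.newMass mass

namespace ClusterHierarchy

variable {L : ℕ} {Γ : Set ℕ}

/-- `c` is a cluster of the hierarchy. -/
def IsCluster (H : ClusterHierarchy L Γ) (c : Finset ℕ) : Prop := ∃ k, c ∈ H.C k

/-- The level `ℓ(C)` of a cluster: the smallest `k` with `C ∈ C_k`. -/
def level (H : ClusterHierarchy L Γ) (c : Finset ℕ) : ℕ := sInf {k | c ∈ H.C k}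

/-- The set of levels of clusters containing `x`; `κ(x)` is its supremum. -/
def kappaSet (H : ClusterHierarchy L Γ) (x : ℕ) : Set ℕ :=
  {ℓ | ∃ c, H.IsCluster c ∧ H.level c = ℓ ∧ x ∈ c}

/-- The limiting partition `C_∞`: the maximal clusters, i.e. clusters which are not met
by any cluster of strictly larger level. -/
def Cinf (H : ClusterHierarchy L Γ) : Set (Finset ℕ) :=
  {c | H.IsCluster c ∧
    ∀ c', H.IsCluster c' → (∃ x, x ∈ c ∧ x ∈ c') → H.level c' ≤ H.level c}

end ClusterHierarchy

end


/-! ### Auxiliary material for the proof -/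

noncomputable section SkeletonAux

open Finset

namespace ClusterSkeleton

/-- conditions on a skeleton pair `(j, g)`: level `j ≥ 1`, gap `1 ≤ g < L^j`. -/
def pairOK (L : ℕ) (p : ℕ × ℕ) : Prop := 1 ≤ p.1 ∧ 1 ≤ p.2 ∧ p.2 < L ^ p.1

/-- the list of points determined by a start `z` and a list of gaps. -/
def ptsL (z : ℕ) : List (ℕ × ℕ) → List ℕ
  | [] => [z]
  | p :: t => z :: ptsL (z + p.2) t

lemma self_mem_ptsL (z : ℕ) (l : List (ℕ × ℕ)) : z ∈ ptsL z l := by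
  cases l <;> simp [ptsL]

lemma le_of_mem_ptsL {x z : ℕ} : ∀ {l : List (ℕ × ℕ)}, x ∈ ptsL z l → z ≤ x := by
  intro l
  induction l generalizing z with
  | nil => intro h; simp [ptsL] at h; omega
  | cons p t ih =>
    intro h
    simp only [ptsL, List.mem_cons] at h
    rcases h with rfl | h
    · exact le_refl x
    · exact le_trans (Nat.le_add_right _ _) (ih h)

lemma length_ptsL (z : ℕ) : ∀ l : List (ℕ × ℕ), (ptsL z l).length = l.length + 1 := by
  intro l
  induction l generalizing z with
  | nil => simp [ptsL]
  | cons p t ih => simp [ptsL, ih]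

lemma nodup_ptsL {l : List (ℕ × ℕ)} (h : ∀ p ∈ l, 1 ≤ p.2) (z : ℕ) : (ptsL z l).Nodup := by
  induction l generalizing z with
  | nil => simp [ptsL]
  | cons p t ih =>
    simp only [ptsL, List.nodup_cons]
    constructor
    · intro hmem
      have h1 := le_of_mem_ptsL hmem
      have h2 := h p (by simp)
      omega
    · exact ih (fun q hq => h q (by simp [hq])) _

lemma mem_ptsL_append (z : ℕ) (a b : List (ℕ × ℕ)) (x : ℕ) :
    x ∈ ptsL z (a ++ b) ↔ x ∈ ptsL z a ∨ x ∈ ptsL (z + (a.map Prod.snd).sum) b := by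
  induction a generalizing z with
  | nil =>
    simp only [List.nil_append, ptsL, List.map_nil, List.sum_nil, Nat.add_zero]
    constructor
    · exact Or.inr
    · rintro (h | h)
      · simp at h; subst h; exact self_mem_ptsL _ _
      · exact h
  | cons p t ih =>
    simp only [List.cons_append, ptsL, List.mem_cons, List.map_cons, List.sum_cons,
      List.append_eq]
    rw [ih]
    have : z + (p.2 + (t.map Prod.snd).sum) = z + p.2 + (t.map Prod.snd).sum := by omega
    rw [this]
    tauto

/-! cluster basics -/

lemma clAlpha_singleton (x : ℕ) : clAlpha {x} = x := by
  simp [clAlpha]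

lemma clOmega_singleton (x : ℕ) : clOmega {x} = x := by
  simp [clOmega]

lemma clAlpha_mem {c : Finset ℕ} (h : c.Nonempty) : clAlpha c ∈ c := by
  obtain ⟨x, hx⟩ := h
  have : sInf (↑c : Set ℕ) ∈ (↑c : Set ℕ) := Nat.sInf_mem ⟨x, by simpa using hx⟩
  simpa [clAlpha] using this

lemma clOmega_mem {c : Finset ℕ} (h : c.Nonempty) : clOmega c ∈ c := by
  obtain ⟨x, hx⟩ := h
  have : sSup (↑c : Set ℕ) ∈ (↑c : Set ℕ) :=
    Set.Nonempty.csSup_mem ⟨x, by simpa using hx⟩ c.finite_toSet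
  simpa [clOmega] using this

lemma clAlpha_le {c : Finset ℕ} {x : ℕ} (hx : x ∈ c) : clAlpha c ≤ x :=
  Nat.sInf_le (by simpa using hx)

lemma le_clOmega {c : Finset ℕ} {x : ℕ} (hx : x ∈ c) : x ≤ clOmega c :=
  le_csSup c.finite_toSet.bddAbove (by simpa using hx)

lemma clAlpha_eq {c : Finset ℕ} {a : ℕ} (ha : a ∈ c) (hlb : ∀ x ∈ c, a ≤ x) :
    clAlpha c = a :=
  le_antisymm (clAlpha_le ha) (le_csInf ⟨a, by simpa using ha⟩ (fun x hx => hlb x (by simpa using hx)))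

lemma clOmega_eq {c : Finset ℕ} {b : ℕ} (hb : b ∈ c) (hub : ∀ x ∈ c, x ≤ b) :
    clOmega c = b :=
  le_antisymm (csSup_le ⟨b, by simpa using hb⟩ (fun x hx => hub x (by simpa using hx)))
    (le_clOmega hb)

lemma gap_le_clDist {a b : Finset ℕ} (hane : a.Nonempty) (hbne : b.Nonempty)
    (h : clOmega a < clAlpha b) : clAlpha b - clOmega a ≤ clDist a b := by
  apply le_csInf
  · exact ⟨_, clOmega a, clOmega_mem hane, clAlpha b, clAlpha_mem hbne, rfl⟩
  · rintro d ⟨x, hx, y, hy, rfl⟩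
    have h1 : x ≤ clOmega a := le_clOmega hx
    have h2 : clAlpha b ≤ y := clAlpha_le hy
    have hxy : x ≤ y := by omega
    rw [max_eq_right hxy, min_eq_left hxy]
    omega

/-- The structural skeleton lemma: every cluster `c ∈ C m` is contained in `Γ`, is nonempty,
and carries a skeleton: a list of (level, gap) pairs starting at `clAlpha c`, all of whose
points lie in `Γ`, ending at `clOmega c`, and whose length is tied to the mass of `c`. -/
lemma skel {L : ℕ} {Γ : Set ℕ} (H : ClusterHierarchy L Γ) :
    ∀ m c, c ∈ H.C m →
      (↑c : Set ℕ) ⊆ Γ ∧ c.Nonempty ∧ ∃ l : List (ℕ × ℕ),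
        (∀ p ∈ l, pairOK L p) ∧
        H.mass c + (l.map (fun p => p.1 - 1)).sum = l.length + 1 ∧
        (∀ x ∈ ptsL (clAlpha c) l, x ∈ Γ) ∧
        clAlpha c + (l.map Prod.snd).sum = clOmega c := by
  intro m
  induction m with
  | zero =>
    intro c hc
    rw [H.C_zero] at hc
    obtain ⟨x, hx, rfl⟩ := hc
    refine ⟨by simpa using hx, ⟨x, by simp⟩, [], by simp, ?_, ?_, ?_⟩
    · simp [H.mass_zero x hx]
    · intro y hy
      simp [ptsL, clAlpha_singleton] at hy
      subst hy; exact hx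
    · simp [clAlpha_singleton, clOmega_singleton]
  | succ m ih =>
    intro c hc
    rcases (H.mem_succ m c).1 hc with ⟨R, rfl⟩ | ⟨hc', _⟩
    · -- run case
      have hn2 := R.two_le
      have hmemF : ∀ i, i < R.n → R.c i ∈ H.C m ∧ m + 1 ≤ H.mass (R.c i) := fun i hi => R.mem i hi
      -- inner induction on the number of constituents bridged
      have key : ∀ t, t < R.n → ∃ l : List (ℕ × ℕ),
          (∀ p ∈ l, pairOK L p) ∧
          (H.mass (R.c 0) + ∑ i ∈ Finset.Ico 1 (t + 1), (H.mass (R.c i) - m))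
              + (l.map (fun p => p.1 - 1)).sum = l.length + 1 ∧
          (∀ x ∈ ptsL (clAlpha (R.c 0)) l, x ∈ Γ) ∧
          clAlpha (R.c 0) + (l.map Prod.snd).sum = clOmega (R.c t) := by
        intro t
        induction t with
        | zero =>
          intro h0
          obtain ⟨hsub, hne, l, h1, h2, h3, h4⟩ := ih _ (hmemF 0 h0).1
          exact ⟨l, h1, by simpa using h2, h3, h4⟩
        | succ t iht =>
          intro ht1
          have ht : t < R.n := by omega
          obtain ⟨l, h1, h2, h3, h4⟩ := iht ht
          obtain ⟨hsubt, hnet, _⟩ := ih _ (hmemF t ht).1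
          obtain ⟨hsub', hne', l', h1', h2', h3', h4'⟩ := ih _ (hmemF (t + 1) ht1).1
          have hord := R.ordered t ht1
          have hclose := R.close t ht1
          have hgap : clAlpha (R.c (t + 1)) - clOmega (R.c t) ≤ clDist (R.c t) (R.c (t + 1)) :=
            gap_le_clDist hnet hne' hord
          set g : ℕ := clAlpha (R.c (t + 1)) - clOmega (R.c t) with hg
          have hg1 : 1 ≤ g := by omega
          have hgL : g < L ^ (m + 1) := lt_of_le_of_lt hgap hclose
          have hmass' : m + 1 ≤ H.mass (R.c (t + 1)) := (hmemF (t + 1) ht1).2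
          refine ⟨l ++ (m + 1, g) :: l', ?_, ?_, ?_, ?_⟩
          · intro p hp
            simp only [List.mem_append, List.mem_cons] at hp
            rcases hp with hp | rfl | hp
            · exact h1 p hp
            · exact ⟨by omega, hg1, hgL⟩
            · exact h1' p hp
          · simp only [List.map_append, List.map_cons, List.sum_append, List.sum_cons,
              List.length_append, List.length_cons]
            rw [Finset.sum_Ico_succ_top (by omega : 1 ≤ t + 1)]
            omega
          · intro x hx
            rw [mem_ptsL_append] at hx
            rcases hx with hx | hx
            · exact h3 x hx
            · rw [h4] at hx
              simp only [ptsL, List.mem_cons] at hx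
              rcases hx with rfl | hx
              · exact hsubt (by simpa using clOmega_mem hnet)
              · have : clOmega (R.c t) + g = clAlpha (R.c (t + 1)) := by omega
                rw [this] at hx
                exact h3' x hx
          · simp only [List.map_append, List.map_cons, List.sum_append, List.sum_cons]
            have : clOmega (R.c t) + g = clAlpha (R.c (t + 1)) := by omega
            omega
      -- conclude for the produced cluster
      obtain ⟨l, h1, h2, h3, h4⟩ := key (R.n - 1) (by omega)
      obtain ⟨hsub0, hne0, _⟩ := ih _ (hmemF 0 (by omega)).1
      obtain ⟨hsubn, hnen, _⟩ := ih _ (hmemF (R.n - 1) (by omega)).1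
      set a : ℕ := clAlpha (R.c 0) with haa
      set b : ℕ := clOmega (R.c (R.n - 1)) with hbb
      have haΓ : a ∈ Γ := hsub0 (by simpa using clAlpha_mem hne0)
      have hbΓ : b ∈ Γ := hsubn (by simpa using clOmega_mem hnen)
      have hab : a ≤ b := by omega
      have hcl : R.cluster Γ = (Finset.Icc a b).filter (fun x => x ∈ Γ) := rfl
      have hamem : a ∈ R.cluster Γ := by
        rw [hcl]; simp [Finset.mem_filter, Finset.mem_Icc, hab, haΓ]
      have hbmem : b ∈ R.cluster Γ := by
        rw [hcl]; simp [Finset.mem_filter, Finset.mem_Icc, hab, hbΓ]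
      have hsub : (↑(R.cluster Γ) : Set ℕ) ⊆ Γ := by
        intro x hx
        rw [hcl] at hx
        simp only [Finset.coe_filter, Set.mem_setOf_eq] at hx
        exact hx.2
      have halpha : clAlpha (R.cluster Γ) = a := by
        apply clAlpha_eq hamem
        intro x hx
        rw [hcl, Finset.mem_filter, Finset.mem_Icc] at hx
        exact hx.1.1
      have homega : clOmega (R.cluster Γ) = b := by
        apply clOmega_eq hbmem
        intro x hx
        rw [hcl, Finset.mem_filter, Finset.mem_Icc] at hx
        exact hx.1.2
      have hmassc : H.mass (R.cluster Γ) =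
          H.mass (R.c 0) + ∑ i ∈ Finset.Ico 1 R.n, (H.mass (R.c i) - m) :=
        H.mass_succ m R
      have hnn : R.n - 1 + 1 = R.n := by omega
      refine ⟨hsub, ⟨a, hamem⟩, l, h1, ?_, ?_, ?_⟩
      · rw [hmassc, ← hnn]; exact h2
      · rw [halpha]; exact h3
      · rw [halpha, homega]; exact h4
    · exact ih c hc'

end ClusterSkeleton

end SkeletonAux


noncomputable section TsumAux

open ENNReal

lemma tsum_fin_pi_prod {β : Type*} (v : β → ℝ≥0∞) :
    ∀ n : ℕ, ∑' f : Fin n → β, ∏ i, v (f i) = (∑' b, v b) ^ n := by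
  intro n
  induction n with
  | zero =>
    rw [pow_zero, tsum_eq_single (fun i : Fin 0 => i.elim0)
      (fun f hf => absurd (funext fun i => i.elim0) hf)]
    simp
  | succ n ihn =>
    rw [← (Fin.consEquiv (fun _ : Fin (n + 1) => β)).tsum_eq
      (fun f : Fin (n + 1) → β => ∏ i, v (f i))]
    rw [ENNReal.tsum_prod']
    have hsplit : ∀ (a : β) (f : Fin n → β),
        (∏ i, v ((Fin.consEquiv (fun _ : Fin (n + 1) => β)) (a, f) i))
          = v a * ∏ i, v (f i) := by
      intro a f
      have : (Fin.consEquiv (fun _ : Fin (n + 1) => β)) (a, f) = Fin.cons a f := rfl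
      rw [this, Fin.prod_univ_succ]
      simp
    calc ∑' (a : β) (f : Fin n → β),
          ∏ i, v ((Fin.consEquiv (fun _ : Fin (n + 1) => β)) (a, f) i)
        = ∑' (a : β) (f : Fin n → β), v a * ∏ i, v (f i) := by
          exact tsum_congr fun a => tsum_congr fun f => hsplit a f
      _ = ∑' (a : β), v a * ∑' f : Fin n → β, ∏ i, v (f i) := by
          exact tsum_congr fun a => ENNReal.tsum_mul_left
      _ = (∑' b, v b) * (∑' b, v b) ^ n := by
          rw [ihn, ENNReal.tsum_mul_right]
      _ = (∑' b, v b) ^ (n + 1) := by rw [pow_succ, mul_comm]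

lemma tsum_list_prod {β : Type*} (v : β → ℝ≥0∞) :
    ∑' l : List β, (l.map v).prod = ∑' n : ℕ, (∑' b, v b) ^ n := by
  rw [← (List.equivSigmaTuple (α := β)).symm.tsum_eq (fun l : List β => (l.map v).prod)]
  rw [ENNReal.tsum_sigma']
  refine tsum_congr fun n => ?_
  rw [← tsum_fin_pi_prod v n]
  refine tsum_congr fun f => ?_
  show ((List.ofFn f).map v).prod = ∏ i, v (f i)
  rw [List.map_ofFn, List.prod_ofFn]
  rfl

end TsumAux

open MeasureTheory ProbabilityTheory
open scoped ENNReal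


open scoped ENNReal in
lemma prod_v_eq {L : ℕ} (D P : ℝ≥0∞) :
    ∀ l : List (ℕ × ℕ), (∀ p ∈ l, ClusterSkeleton.pairOK L p) →
      (l.map (fun p => if ClusterSkeleton.pairOK L p then D * P ^ (p.1 - 1) * P⁻¹ else 0)).prod
        = D ^ l.length * P ^ ((l.map (fun p => p.1 - 1)).sum) * P⁻¹ ^ l.length := by
  intro l
  induction l with
  | nil => simp
  | cons p t ih =>
    intro h
    simp only [List.map_cons, List.prod_cons, List.length_cons, List.sum_cons]
    rw [ih (fun q hq => h q (List.mem_cons_of_mem _ hq)), if_pos (h p List.mem_cons_self)]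
    rw [pow_succ D, pow_succ P⁻¹, pow_add]
    ring

/-- Let `δ > 0` and `L ≥ 3` with `64δL² < 1`. For every `z ∈ ℤ₊` and every
`k ≥ 1`, the probability that there exists a cluster `C` of level at least 1 with
`α(C) = z` and `m(C) = k` is at most `32(2δL)^k / ((1 − 4δL²)(1 − 64δL²))`. -/
theorem prob_cluster_start_le (δ : ℝ) (L : ℕ) (hδ : 0 < δ) (hL3 : 3 ≤ L)
    (hLδ : 64 * δ * (L : ℝ) ^ 2 < 1)
    {Ω : Type} [MeasurableSpace Ω] (μ : Measure Ω) [IsProbabilityMeasure μ]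
    (ξ : ℕ → Ω → Bool) (hmeas : ∀ i, Measurable (ξ i))
    (hindep : iIndepFun ξ μ)
    (hlaw : ∀ i, μ {ω | ξ i ω = true} = ENNReal.ofReal δ)
    (z k : ℕ) (hk : 1 ≤ k) :
    μ {ω | ∃ H : ClusterHierarchy L {x | ξ x ω = true}, ∃ c : Finset ℕ,
        H.IsCluster c ∧ 1 ≤ H.level c ∧ clAlpha c = z ∧ H.mass c = k} ≤
      ENNReal.ofReal (32 * (2 * δ * L) ^ k /
        ((1 - 4 * δ * (L : ℝ) ^ 2) * (1 - 64 * δ * (L : ℝ) ^ 2))) := by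
  classical
  have h3L : (3:ℝ) ≤ (L:ℝ) := by exact_mod_cast hL3
  have hL0 : (0:ℝ) < L := by linarith
  have hP0 : (0:ℝ) < 2 * δ * L := by positivity
  set D : ℝ≥0∞ := ENNReal.ofReal δ with hD
  set P : ℝ≥0∞ := ENNReal.ofReal (2 * δ * L) with hP
  have hPne0 : P ≠ 0 := by
    rw [hP, Ne, ENNReal.ofReal_eq_zero]
    linarith
  have hPnetop : P ≠ ⊤ := ENNReal.ofReal_ne_top
  set v : ℕ × ℕ → ℝ≥0∞ :=
    fun p => if ClusterSkeleton.pairOK L p then D * P ^ (p.1 - 1) * P⁻¹ else 0 with hv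
  set okL : List (ℕ × ℕ) → Prop := fun l =>
    (∀ p ∈ l, ClusterSkeleton.pairOK L p) ∧
      k + (l.map (fun p => p.1 - 1)).sum = l.length + 1 with hokL
  set B : List (ℕ × ℕ) → Set Ω := fun l =>
    if okL l then {ω | ∀ x ∈ ClusterSkeleton.ptsL z l, ξ x ω = true} else ∅ with hB
  -- Step 1: the event is covered by the union of the skeleton events
  have hcover : {ω | ∃ H : ClusterHierarchy L {x | ξ x ω = true}, ∃ c : Finset ℕ,
      H.IsCluster c ∧ 1 ≤ H.level c ∧ clAlpha c = z ∧ H.mass c = k} ⊆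
      ⋃ l : List (ℕ × ℕ), B l := by
    intro ω hω
    obtain ⟨H, c, ⟨m, hcm⟩, -, hα, hmass⟩ := hω
    obtain ⟨hsub, hne, l, h1, h2, h3, h4⟩ := ClusterSkeleton.skel H m c hcm
    rw [hα] at h3
    rw [hmass] at h2
    refine Set.mem_iUnion.2 ⟨l, ?_⟩
    rw [hB]
    simp only [if_pos (show okL l from ⟨h1, h2⟩)]
    intro x hx
    exact h3 x hx
  -- Step 2: the measure of each skeleton event
  have hlistbound : ∀ l : List (ℕ × ℕ),
      μ (B l) ≤ D * P ^ (k - 1) * (l.map v).prod := by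
    intro l
    by_cases hok : okL l
    · obtain ⟨hpair, hsum⟩ := hok
      rw [hB]
      simp only [if_pos (show okL l from ⟨hpair, hsum⟩)]
      set S : Finset ℕ := (ClusterSkeleton.ptsL z l).toFinset with hS
      have hset : {ω | ∀ x ∈ ClusterSkeleton.ptsL z l, ξ x ω = true}
          = ⋂ x ∈ S, (ξ x) ⁻¹' {true} := by
        ext ω
        simp [hS, Set.mem_iInter, List.mem_toFinset]
      have hcard : S.card = l.length + 1 := by
        rw [hS, List.toFinset_card_of_nodup
          (ClusterSkeleton.nodup_ptsL (fun p hp => (hpair p hp).2.1) z),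
          ClusterSkeleton.length_ptsL]
      have hμA : μ {ω | ∀ x ∈ ClusterSkeleton.ptsL z l, ξ x ω = true}
          = D ^ (l.length + 1) := by
        rw [hset, hindep.meas_biInter
          (fun i _ => ⟨{true}, measurableSet_singleton true, rfl⟩)]
        have hone : ∀ x ∈ S, μ ((ξ x) ⁻¹' {true}) = D := by
          intro x _
          have hpre : (ξ x) ⁻¹' {true} = {ω | ξ x ω = true} := by
            ext ω; simp
          rw [hpre]
          exact hlaw x
        rw [Finset.prod_congr rfl hone, Finset.prod_const, hcard]
      rw [hμA]
      apply le_of_eq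
      rw [hv, prod_v_eq D P l hpair]
      have h1 : (k - 1) + (l.map (fun p => p.1 - 1)).sum = l.length := by omega
      calc D ^ (l.length + 1)
          = D ^ (l.length + 1) * (P ^ l.length * P⁻¹ ^ l.length) := by
            rw [← mul_pow, ENNReal.mul_inv_cancel hPne0 hPnetop, one_pow, mul_one]
        _ = D ^ (l.length + 1) * (P ^ ((k - 1) + (l.map (fun p => p.1 - 1)).sum)
              * P⁻¹ ^ l.length) := by rw [h1]
        _ = D * P ^ (k - 1) * (D ^ l.length * P ^ ((l.map (fun p => p.1 - 1)).sum)
              * P⁻¹ ^ l.length) := by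
            rw [pow_add, pow_succ]
            ring
    · rw [hB]
      simp only [if_neg hok]
      simp
  -- Step 3: bounding the sum of the pair weights
  set Q : ℝ≥0∞ := ENNReal.ofReal (2 * δ * (L:ℝ) ^ 2) with hQdef
  have hQ : Q ≤ ENNReal.ofReal (1/32) := by
    rw [hQdef]
    apply ENNReal.ofReal_le_ofReal
    nlinarith [sq_nonneg (L:ℝ)]
  have hinner : ∀ m : ℕ, (∑' g : ℕ, v (m + 1, g)) ≤ ENNReal.ofReal (1/2) * Q ^ m := by
    intro m
    have hvan : ∀ g ∉ Finset.range (L ^ (m + 1)), v (m + 1, g) = 0 := by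
      intro g hg
      rw [hv]
      simp only
      rw [if_neg]
      rintro ⟨-, -, hlt⟩
      have hlt' : g < L ^ (m + 1) := hlt
      simp only [Finset.mem_range, not_lt] at hg
      omega
    rw [tsum_eq_sum hvan]
    have hterm : ∀ g ∈ Finset.range (L ^ (m + 1)), v (m + 1, g) ≤ D * P ^ m * P⁻¹ := by
      intro g _
      rw [hv]
      simp only
      split
      · exact le_rfl
      · exact zero_le
    calc ∑ g ∈ Finset.range (L ^ (m + 1)), v (m + 1, g)
        ≤ ∑ _g ∈ Finset.range (L ^ (m + 1)), (D * P ^ m * P⁻¹) := Finset.sum_le_sum hterm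
      _ = ((L ^ (m + 1) : ℕ) : ℝ≥0∞) * (D * P ^ m * P⁻¹) := by
          rw [Finset.sum_const, Finset.card_range, nsmul_eq_mul]
      _ = ENNReal.ofReal (1/2) * Q ^ m := by
          rw [hD, hP, hQdef]
          rw [← ENNReal.ofReal_inv_of_pos hP0, ← ENNReal.ofReal_pow (by positivity),
            ← ENNReal.ofReal_pow (by positivity)]
          have hcast : ((L ^ (m + 1) : ℕ) : ℝ≥0∞) = ENNReal.ofReal ((L:ℝ) ^ (m + 1)) := by
            rw [← ENNReal.ofReal_natCast]
            push_cast
            ring_nf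
          rw [hcast, ← ENNReal.ofReal_mul (by positivity), ← ENNReal.ofReal_mul (by positivity),
            ← ENNReal.ofReal_mul (by positivity), ← ENNReal.ofReal_mul (by norm_num)]
          congr 1
          have hpow : (2 * δ * (L:ℝ) ^ 2) ^ m = (2 * δ * L) ^ m * (L:ℝ) ^ m := by
            rw [← mul_pow]
            ring_nf
          rw [hpow, pow_succ]
          field_simp
  have hSsum : (∑' p : ℕ × ℕ, v p) ≤ ENNReal.ofReal (16/31) := by
    rw [ENNReal.tsum_prod']
    have hzero : (∑' g : ℕ, v (0, g)) = 0 := by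
      have : ∀ g : ℕ, v (0, g) = 0 := by
        intro g
        rw [hv]
        simp only
        rw [if_neg]
        rintro ⟨h1, -⟩
        omega
      simp [this]
    have hshift : (∑' j : ℕ, ∑' g : ℕ, v (j, g)) = ∑' m : ℕ, ∑' g : ℕ, v (m + 1, g) := by
      have hsupp : (Function.support fun j : ℕ => ∑' g : ℕ, v (j, g)) ⊆
          Set.range Nat.succ := by
        intro x hx
        match x with
        | 0 => exact absurd hzero hx
        | Nat.succ m => exact ⟨m, rfl⟩
      have h := Function.Injective.tsum_eq (g := Nat.succ) Nat.succ_injective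
        (f := fun j : ℕ => ∑' g : ℕ, v (j, g)) hsupp
      simpa [Nat.succ_eq_add_one] using h.symm
    rw [hshift]
    calc (∑' m : ℕ, ∑' g : ℕ, v (m + 1, g))
        ≤ ∑' m : ℕ, ENNReal.ofReal (1/2) * Q ^ m := ENNReal.tsum_le_tsum hinner
      _ = ENNReal.ofReal (1/2) * ∑' m : ℕ, Q ^ m := ENNReal.tsum_mul_left
      _ = ENNReal.ofReal (1/2) * (1 - Q)⁻¹ := by rw [ENNReal.tsum_geometric]
      _ ≤ ENNReal.ofReal (1/2) * (1 - ENNReal.ofReal (1/32))⁻¹ :=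
          mul_le_mul_right (ENNReal.inv_le_inv' (tsub_le_tsub_left hQ 1)) _
      _ = ENNReal.ofReal (16/31) := by
          rw [show (1:ℝ≥0∞) = ENNReal.ofReal 1 from ENNReal.ofReal_one.symm,
            ← ENNReal.ofReal_sub _ (by norm_num : (0:ℝ) ≤ 1/32)]
          rw [show (1 : ℝ) - 1/32 = 31/32 by norm_num]
          rw [← ENNReal.ofReal_inv_of_pos (by norm_num : (0:ℝ) < 31/32)]
          rw [← ENNReal.ofReal_mul (by norm_num : (0:ℝ) ≤ 1/2)]
          norm_num
  have hgeominv : (1 - ∑' p : ℕ × ℕ, v p)⁻¹ ≤ ENNReal.ofReal (31/15) := by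
    have h1 : ENNReal.ofReal (15/31) ≤ 1 - ∑' p : ℕ × ℕ, v p := by
      have heq : ENNReal.ofReal (15/31) = 1 - ENNReal.ofReal (16/31) := by
        rw [show (1:ℝ≥0∞) = ENNReal.ofReal 1 from ENNReal.ofReal_one.symm,
          ← ENNReal.ofReal_sub _ (by norm_num : (0:ℝ) ≤ 16/31)]
        norm_num
      rw [heq]
      exact tsub_le_tsub_left hSsum 1
    calc (1 - ∑' p : ℕ × ℕ, v p)⁻¹
        ≤ (ENNReal.ofReal (15/31))⁻¹ := ENNReal.inv_le_inv' h1
      _ = ENNReal.ofReal (31/15) := by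
          rw [← ENNReal.ofReal_inv_of_pos (by norm_num : (0:ℝ) < 15/31)]
          norm_num
  -- Step 4: putting everything together
  calc μ {ω | ∃ H : ClusterHierarchy L {x | ξ x ω = true}, ∃ c : Finset ℕ,
        H.IsCluster c ∧ 1 ≤ H.level c ∧ clAlpha c = z ∧ H.mass c = k}
      ≤ μ (⋃ l : List (ℕ × ℕ), B l) := measure_mono hcover
    _ ≤ ∑' l : List (ℕ × ℕ), μ (B l) := measure_iUnion_le _
    _ ≤ ∑' l : List (ℕ × ℕ), D * P ^ (k - 1) * (l.map v).prod :=
        ENNReal.tsum_le_tsum hlistbound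
    _ = D * P ^ (k - 1) * ∑' l : List (ℕ × ℕ), (l.map v).prod := ENNReal.tsum_mul_left
    _ = D * P ^ (k - 1) * ∑' n : ℕ, (∑' p : ℕ × ℕ, v p) ^ n := by rw [tsum_list_prod]
    _ = D * P ^ (k - 1) * (1 - ∑' p : ℕ × ℕ, v p)⁻¹ := by rw [ENNReal.tsum_geometric]
    _ ≤ D * P ^ (k - 1) * ENNReal.ofReal (31/15) := mul_le_mul_right hgeominv _
    _ = ENNReal.ofReal (δ * (2 * δ * L) ^ (k - 1) * (31/15)) := by
        rw [hD, hP, ← ENNReal.ofReal_pow hP0.le, ← ENNReal.ofReal_mul hδ.le,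
          ← ENNReal.ofReal_mul (by positivity)]
    _ ≤ ENNReal.ofReal (32 * (2 * δ * L) ^ k /
          ((1 - 4 * δ * (L : ℝ) ^ 2) * (1 - 64 * δ * (L : ℝ) ^ 2))) := by
        apply ENNReal.ofReal_le_ofReal
        obtain ⟨k', rfl⟩ : ∃ k', k = k' + 1 := ⟨k - 1, by omega⟩
        simp only [Nat.add_sub_cancel]
        have hA : (0:ℝ) ≤ (2 * δ * (L:ℝ)) ^ k' := by positivity
        have hd1 : (0:ℝ) < 1 - 4 * δ * (L:ℝ) ^ 2 := by nlinarith [sq_nonneg (L:ℝ)]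
        have hd2 : (0:ℝ) < 1 - 64 * δ * (L:ℝ) ^ 2 := by linarith
        have hdd : (0:ℝ) < (1 - 4 * δ * (L:ℝ) ^ 2) * (1 - 64 * δ * (L:ℝ) ^ 2) := by positivity
        have hdd1 : (1 - 4 * δ * (L:ℝ) ^ 2) * (1 - 64 * δ * (L:ℝ) ^ 2) ≤ 1 := by
          nlinarith [mul_le_mul_of_nonneg_right hLδ.le
            (by positivity : (0:ℝ) ≤ 4 * δ * (L:ℝ) ^ 2),
            mul_pos hδ (by positivity : (0:ℝ) < (L:ℝ) ^ 2)]
        rw [le_div_iff₀ hdd, pow_succ (2 * δ * (L:ℝ)) k']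
        nlinarith [mul_le_mul_of_nonneg_left hdd1
            (by positivity : (0:ℝ) ≤ δ * (2 * δ * (L:ℝ)) ^ k' * (31/15)),
          mul_le_mul_of_nonneg_left (by linarith : (31/15:ℝ) ≤ 64 * (L:ℝ))
            (mul_nonneg hδ.le hA)]
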